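/- arXiv:0911.1521 — 2 statements merged into one kernel-verified Lean document; each statement's English description precedes it below -/
import Mathlib

section
/- Let 𝔹^n ⊂ ℂ^n (n ≥ 2) be the open unit ball and let A be a map from the closed unit disc Δ̄ ⊂ ℂ to the closed unit ball with A(0) = 0. Then A is a stationary disc of 𝔹^n if and only if there exists v ∈ ℂ^n with |v| = 1 such that A(ζ) = ζ v for all ζ ∈ Δ̄. -/
open Complex Metric Set
open Topology

/-- dslope of a map vanishing at 0 : basic properties on the unit disc. -/
lemma dslope_basic {E : Type*} [NormedAddCommGroup E] [NormedSpace ℂ E] [CompleteSpace E] {f : ℂ → E}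
    (hc : ContinuousOn f (closedBall 0 1)) (hd : DifferentiableOn ℂ f (ball 0 1))
    (h0 : f 0 = 0) :
    ContinuousOn (dslope f 0) (closedBall 0 1) ∧
      DifferentiableOn ℂ (dslope f 0) (ball 0 1) ∧
      ∀ ζ : ℂ, f ζ = ζ • dslope f 0 ζ := by
  have hmem : ball (0:ℂ) 1 ∈ 𝓝 (0:ℂ) := Metric.ball_mem_nhds 0 one_pos
  have hdd : DifferentiableOn ℂ (dslope f 0) (ball 0 1) :=
    (Complex.differentiableOn_dslope hmem).2 hd
  have hsmul : ∀ ζ : ℂ, f ζ = ζ • dslope f 0 ζ := by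
    intro ζ
    have := sub_smul_dslope f 0 ζ
    simpa [h0] using this.symm
  refine ⟨?_, hdd, hsmul⟩
  intro x hx
  by_cases hx0 : x = 0
  · subst hx0
    exact ((hdd.differentiableAt (isOpen_ball.mem_nhds (by simp))).continuousAt).continuousWithinAt
  · have h1 : ContinuousWithinAt (fun ζ : ℂ => ζ⁻¹ • f ζ) (closedBall 0 1) x :=
      ((continuousAt_inv₀ hx0).continuousWithinAt).smul (hc x hx)
    refine h1.congr_of_eventuallyEq ?_ ?_
    · filter_upwards [mem_nhdsWithin_of_mem_nhds (isOpen_compl_singleton.mem_nhds hx0)] with y hy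
      have : y ≠ 0 := hy
      rw [dslope_of_ne f this, slope]
      simp [h0]
    · rw [dslope_of_ne f hx0, slope]
      simp [h0]

/-- A holomorphic function on the disc, continuous up to the boundary, with real boundary
values, is constant. -/
lemma const_of_real_boundary {f : ℂ → ℂ} (hc : ContinuousOn f (closedBall 0 1))
    (hd : DifferentiableOn ℂ f (ball 0 1)) (him : ∀ ζ ∈ sphere (0:ℂ) 1, (f ζ).im = 0) :
    ∀ ζ ∈ closedBall (0:ℂ) 1, f ζ = f 0 := by
  have hclos : closure (ball (0:ℂ) 1) = closedBall 0 1 := closure_ball 0 one_ne_zero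
  have hfr : frontier (ball (0:ℂ) 1) = sphere 0 1 := frontier_ball 0 one_ne_zero
  -- step 1: Im f = 0 on the closed ball
  have him' : ∀ z ∈ closedBall (0:ℂ) 1, (f z).im = 0 := by
    have hnorm : ∀ (s : ℝ) (z : ℂ), ‖Complex.exp ((s : ℂ) * I * f z)‖ = Real.exp (-(s * (f z).im)) := by
      intro s z
      rw [Complex.norm_exp]
      congr 1
      simp [Complex.mul_re, Complex.mul_im]
    have key : ∀ s : ℝ, ∀ z ∈ closedBall (0:ℂ) 1, Real.exp (-(s * (f z).im)) ≤ 1 := by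
      intro s z hz
      have hdc : DiffContOnCl ℂ (fun z => Complex.exp ((s : ℂ) * I * f z)) (ball 0 1) := by
        refine ⟨(hd.const_mul _).cexp, ?_⟩
        rw [hclos]
        exact ((hc.const_smul ((s:ℂ) * I)).cexp : )
      have := Complex.norm_le_of_forall_mem_frontier_norm_le isBounded_ball hdc
        (C := 1) (fun w hw => by
          rw [hnorm]
          rw [hfr] at hw
          rw [him w hw]
          simp) (z := z) (by rw [hclos]; exact hz)
      rwa [hnorm] at this
    intro z hz
    have h1 := key 1 z hz
    have h2 := key (-1) z hz
    rw [Real.exp_le_one_iff] at h1 h2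
    simp only [one_mul, neg_mul, neg_neg, neg_nonpos] at h1 h2
    linarith
  -- step 2: open mapping theorem forces f constant on the ball
  have han : AnalyticOnNhd ℂ f (ball 0 1) := hd.analyticOnNhd isOpen_ball
  have hconst : ∃ w, ∀ z ∈ ball (0:ℂ) 1, f z = w := by
    rcases han.is_constant_or_isOpen (convex_ball (0:ℂ) 1).isPreconnected with h | h
    · exact h
    · exfalso
      have hopen : IsOpen (f '' ball (0:ℂ) 1) := h _ subset_rfl isOpen_ball
      have hmem : f 0 ∈ f '' ball (0:ℂ) 1 := ⟨0, by simp, rfl⟩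
      rcases Metric.isOpen_iff.1 hopen _ hmem with ⟨ε, hε, hball⟩
      have hpt : f 0 + (ε/2 : ℝ) * I ∈ ball (f 0) ε := by
        rw [mem_ball, dist_self_add_left]
        have : ‖((ε/2 : ℝ) : ℂ) * I‖ = ε / 2 := by
          simp [abs_of_pos hε]
        rw [this]; linarith
      rcases hball hpt with ⟨z, hz, hzeq⟩
      have hz0 : (f z).im = 0 := him' z (ball_subset_closedBall hz)
      have : (f 0 + (ε/2 : ℝ) * I).im = 0 := by rw [← hzeq]; exact hz0
      have h00 : (f 0).im = 0 := him' 0 (by simp)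
      simp [Complex.add_im, h00] at this
      linarith
  rcases hconst with ⟨w, hw⟩
  have heq : EqOn f (fun _ => w) (closedBall (0:ℂ) 1) := by
    refine Set.EqOn.of_subset_closure (fun z hz => hw z hz) hc continuousOn_const
      ball_subset_closedBall ?_
    rw [hclos]
  intro ζ hζ
  rw [heq hζ, heq (show (0:ℂ) ∈ closedBall (0:ℂ) 1 by simp)]

/-- `A : Δ̄ → 𝔹̄ⁿ` is a stationary disc of the unit ball (with defining function
`ρ(z) = |z|² - 1`, whose Wirtinger gradient at `z` is `conj z`): `A` is continuous on
the closed unit disc, holomorphic on the open disc, nonconstant, maps the closed disc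
into the closed ball and the unit circle into the unit sphere, and there is a positive
continuous weight `p` on the circle such that `ζ ↦ ζ · p(ζ) · conj(A(ζ))` extends
continuously to the closed disc and holomorphically to the open disc. -/
def IsStationaryDiscBall {n : ℕ} (A : ℂ → EuclideanSpace ℂ (Fin n)) : Prop :=
  ContinuousOn A (closedBall 0 1) ∧
  DifferentiableOn ℂ A (ball 0 1) ∧
  (¬ ∃ c, ∀ ζ ∈ closedBall (0 : ℂ) 1, A ζ = c) ∧
  (∀ ζ ∈ closedBall (0 : ℂ) 1, ‖A ζ‖ ≤ 1) ∧
  (∀ ζ ∈ sphere (0 : ℂ) 1, ‖A ζ‖ = 1) ∧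
  ∃ p : ℂ → ℝ, ContinuousOn p (sphere 0 1) ∧ (∀ ζ ∈ sphere (0 : ℂ) 1, 0 < p ζ) ∧
    ∃ G : ℂ → EuclideanSpace ℂ (Fin n),
      ContinuousOn G (closedBall 0 1) ∧ DifferentiableOn ℂ G (ball 0 1) ∧
      ∀ ζ ∈ sphere (0 : ℂ) 1, ∀ j, G ζ j = ζ * (p ζ : ℂ) * (starRingEnd ℂ) (A ζ j)

/-- **The stationary discs of the ball through the origin are exactly the linear discs**
`ζ ↦ ζ v` with `|v| = 1`. -/
theorem stationary_disc_ball_through_origin_iff_linear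
    {n : ℕ} (hn : 2 ≤ n) (A : ℂ → EuclideanSpace ℂ (Fin n))
    (hA : ∀ ζ ∈ closedBall (0 : ℂ) 1, ‖A ζ‖ ≤ 1) (h0 : A 0 = 0) :
    IsStationaryDiscBall A ↔
      ∃ v : EuclideanSpace ℂ (Fin n), ‖v‖ = 1 ∧
        ∀ ζ ∈ closedBall (0 : ℂ) 1, A ζ = ζ • v := by
  have one_mem_sphere : (1:ℂ) ∈ sphere (0:ℂ) 1 := by simp
  have one_mem_cb : (1:ℂ) ∈ closedBall (0:ℂ) 1 := by simp
  have zero_mem_cb : (0:ℂ) ∈ closedBall (0:ℂ) 1 := by simp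
  constructor
  · rintro ⟨hc, hd, -, -, hsph, p, -, hp_pos, G, hGc, hGd, hGb⟩
    -- coordinate functions
    have hAjc : ∀ j, ContinuousOn (fun ζ => A ζ j) (closedBall 0 1) := fun j =>
      (EuclideanSpace.proj j).continuous.comp_continuousOn hc
    have hAjd : ∀ j, DifferentiableOn ℂ (fun ζ => A ζ j) (ball 0 1) := fun j => by
      have := (EuclideanSpace.proj (𝕜 := ℂ) j).differentiable.comp_differentiableOn hd
      exact this
    have hGjc : ∀ j, ContinuousOn (fun ζ => G ζ j) (closedBall 0 1) := fun j =>
      (EuclideanSpace.proj j).continuous.comp_continuousOn hGc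
    have hGjd : ∀ j, DifferentiableOn ℂ (fun ζ => G ζ j) (ball 0 1) := fun j => by
      have := (EuclideanSpace.proj (𝕜 := ℂ) j).differentiable.comp_differentiableOn hGd
      exact this
    -- the scalar function h = Σ A_j G_j
    set h : ℂ → ℂ := fun ζ => ∑ j, A ζ j * G ζ j with hh_def
    have hhc : ContinuousOn h (closedBall 0 1) := by
      apply continuousOn_finset_sum
      intro j _
      exact (hAjc j).mul (hGjc j)
    have hhd : DifferentiableOn ℂ h (ball 0 1) := by
      apply DifferentiableOn.fun_sum
      intro j _
      exact (hAjd j).mul (hGjd j)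
    have hh0 : h 0 = 0 := by
      have hz : ∀ j, A 0 j = 0 := fun j => by rw [h0]; rfl
      simp [hh_def, hz]
    have hne0 : ∀ ζ ∈ sphere (0:ℂ) 1, ζ ≠ 0 := by
      intro ζ hζ
      rw [mem_sphere_zero_iff_norm] at hζ
      intro h'
      rw [h'] at hζ; simp at hζ
    -- boundary values of h
    have hhb : ∀ ζ ∈ sphere (0:ℂ) 1, h ζ = ζ * (p ζ : ℂ) := by
      intro ζ hζ
      have hsum : ∑ j, A ζ j * (starRingEnd ℂ) (A ζ j) = ((‖A ζ‖ ^ 2 : ℝ) : ℂ) := by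
        rw [PiLp.norm_sq_eq_of_L2]
        push_cast
        refine Finset.sum_congr rfl fun j _ => ?_
        rw [Complex.mul_conj']
      calc h ζ = ∑ j, A ζ j * (ζ * (p ζ : ℂ) * (starRingEnd ℂ) (A ζ j)) := by
            refine Finset.sum_congr rfl fun j _ => ?_
            rw [hGb ζ hζ j]
        _ = ζ * (p ζ : ℂ) * ∑ j, A ζ j * (starRingEnd ℂ) (A ζ j) := by
            rw [Finset.mul_sum]; refine Finset.sum_congr rfl fun j _ => by ring
        _ = ζ * (p ζ : ℂ) := by rw [hsum, hsph ζ hζ]; simp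
    -- k = h/ζ
    obtain ⟨hkc, hkd, hksmul⟩ := dslope_basic hhc hhd hh0
    set k : ℂ → ℂ := dslope h 0 with hk_def
    have hkb : ∀ ζ ∈ sphere (0:ℂ) 1, k ζ = (p ζ : ℂ) := by
      intro ζ hζ
      have hz := hne0 ζ hζ
      have hks := hksmul ζ
      rw [hhb ζ hζ, smul_eq_mul] at hks
      exact (mul_left_cancel₀ hz hks).symm
    have hkim : ∀ ζ ∈ sphere (0:ℂ) 1, (k ζ).im = 0 := by
      intro ζ hζ; rw [hkb ζ hζ]; exact Complex.ofReal_im _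
    have hkconst := const_of_real_boundary hkc hkd hkim
    set c : ℂ := k 0 with hc_def
    have hc_eq : c = ((p 1 : ℝ) : ℂ) := by
      rw [← hkb 1 one_mem_sphere, hkconst 1 one_mem_cb]
    have hc_ne : c ≠ 0 := by
      rw [hc_eq]
      exact_mod_cast ne_of_gt (hp_pos 1 one_mem_sphere)
    have hpc : ∀ ζ ∈ sphere (0:ℂ) 1, ((p ζ : ℝ) : ℂ) = c := by
      intro ζ hζ
      rw [← hkb ζ hζ, hkconst ζ (sphere_subset_closedBall hζ)]
    -- B = A/ζ
    obtain ⟨hBc, hBd, hBsmul⟩ := dslope_basic hc hd h0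
    set B : ℂ → EuclideanSpace ℂ (Fin n) := dslope A 0 with hB_def
    have hBjc : ∀ j, ContinuousOn (fun ζ => B ζ j) (closedBall 0 1) := fun j =>
      (EuclideanSpace.proj j).continuous.comp_continuousOn hBc
    have hBjd : ∀ j, DifferentiableOn ℂ (fun ζ => B ζ j) (ball 0 1) := fun j => by
      have := (EuclideanSpace.proj (𝕜 := ℂ) j).differentiable.comp_differentiableOn hBd
      exact this
    -- boundary relation: conj (B ζ j) = c⁻¹ G ζ j
    have hbrel : ∀ ζ ∈ sphere (0:ℂ) 1, ∀ j,
        (starRingEnd ℂ) (B ζ j) = c⁻¹ * G ζ j := by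
      intro ζ hζ j
      have hz := hne0 ζ hζ
      have hnorm1 : ‖ζ‖ = 1 := mem_sphere_zero_iff_norm.1 hζ
      have hmc : (starRingEnd ℂ) ζ * ζ = 1 := by
        rw [mul_comm, Complex.mul_conj]
        norm_cast
        rw [Complex.normSq_eq_norm_sq, hnorm1]; norm_num
      have hζinv : (starRingEnd ℂ) ζ = ζ⁻¹ := eq_inv_of_mul_eq_one_left hmc
      have hAj : A ζ j = ζ * B ζ j := by
        have := hBsmul ζ
        rw [this, PiLp.smul_apply, smul_eq_mul]
      rw [hGb ζ hζ j, hAj, hpc ζ hζ, map_mul, hζinv]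
      have hcalc : c⁻¹ * (ζ * c * (ζ⁻¹ * (starRingEnd ℂ) (B ζ j))) = (starRingEnd ℂ) (B ζ j) := by
        field_simp
      exact hcalc.symm
    -- each coordinate of B is constant
    have hBconst : ∀ j, ∀ ζ ∈ closedBall (0:ℂ) 1, B ζ j = B 0 j := by
      intro j
      set u : ℂ → ℂ := fun ζ => B ζ j + c⁻¹ * G ζ j with hu_def
      set w : ℂ → ℂ := fun ζ => -I * (B ζ j - c⁻¹ * G ζ j) with hw_def
      have huc : ContinuousOn u (closedBall 0 1) :=
        (hBjc j).add (continuousOn_const.mul (hGjc j))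
      have hud : DifferentiableOn ℂ u (ball 0 1) :=
        (hBjd j).add ((differentiableOn_const _).mul (hGjd j))
      have hwc : ContinuousOn w (closedBall 0 1) :=
        continuousOn_const.mul ((hBjc j).sub (continuousOn_const.mul (hGjc j)))
      have hwd : DifferentiableOn ℂ w (ball 0 1) :=
        (differentiableOn_const _).mul ((hBjd j).sub ((differentiableOn_const _).mul (hGjd j)))
      have huim : ∀ ζ ∈ sphere (0:ℂ) 1, (u ζ).im = 0 := by
        intro ζ hζ
        have := hbrel ζ hζ j
        simp only [hu_def, ← this]
        simp
      have hwim : ∀ ζ ∈ sphere (0:ℂ) 1, (w ζ).im = 0 := by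
        intro ζ hζ
        have := hbrel ζ hζ j
        simp only [hw_def, ← this]
        simp [Complex.mul_im, Complex.sub_re]
      have hu := const_of_real_boundary huc hud huim
      have hw := const_of_real_boundary hwc hwd hwim
      intro ζ hζ
      have h1 := hu ζ hζ
      have h2 := hw ζ hζ
      have hI : (I:ℂ) * -I = 1 := by rw [mul_neg, Complex.I_mul_I, neg_neg]
      have e1 : ∀ ξ : ℂ, u ξ + I * w ξ = 2 * B ξ j := by
        intro ξ
        simp only [hu_def, hw_def]
        calc B ξ j + c⁻¹ * G ξ j + I * (-I * (B ξ j - c⁻¹ * G ξ j))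
            = B ξ j + c⁻¹ * G ξ j + (I * -I) * (B ξ j - c⁻¹ * G ξ j) := by ring
          _ = 2 * B ξ j := by rw [hI]; ring
      have : (2:ℂ) * B ζ j = 2 * B 0 j := by
        rw [← e1 ζ, ← e1 0, h1, h2]
      exact mul_left_cancel₀ two_ne_zero this
    -- conclude
    refine ⟨B 0, ?_, ?_⟩
    · have hA1 : A 1 = (1:ℂ) • B 0 := by
        rw [hBsmul 1]
        congr 1
        apply PiLp.ext
        intro j
        exact hBconst j 1 one_mem_cb
      have := hsph 1 one_mem_sphere
      rw [hA1, one_smul] at this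
      exact this
    · intro ζ hζ
      rw [hBsmul ζ]
      congr 1
      apply PiLp.ext
      intro j
      exact hBconst j ζ hζ
  · rintro ⟨v, hv, hlin⟩
    have hv0 : v ≠ 0 := by intro h'; rw [h'] at hv; simp at hv
    refine ⟨?_, ?_, ?_, ?_, ?_, ?_⟩
    · exact ((continuous_id.smul continuous_const :
        Continuous fun ζ : ℂ => ζ • v).continuousOn).congr fun ζ hζ => hlin ζ hζ
    · exact (((differentiable_id : Differentiable ℂ fun ζ : ℂ => ζ).smul_const
        v).differentiableOn).congr fun ζ hζ => hlin ζ (ball_subset_closedBall hζ)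
    · rintro ⟨cst, hcst⟩
      have h1 : A 0 = cst := hcst 0 zero_mem_cb
      have h2 : A 1 = cst := hcst 1 one_mem_cb
      rw [hlin 1 one_mem_cb, one_smul] at h2
      rw [h0] at h1
      exact hv0 (h2.trans h1.symm)
    · intro ζ hζ
      rw [hlin ζ hζ, norm_smul, hv, mul_one]
      exact mem_closedBall_zero_iff.1 hζ
    · intro ζ hζ
      rw [hlin ζ (sphere_subset_closedBall hζ), norm_smul, hv, mul_one]
      exact mem_sphere_zero_iff_norm.1 hζ
    · refine ⟨fun _ => 1, continuousOn_const, fun _ _ => one_pos,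
        fun _ => (WithLp.toLp 2 (fun j => (starRingEnd ℂ) (v j)) : EuclideanSpace ℂ (Fin n)),
        continuousOn_const, differentiableOn_const _, ?_⟩
      intro ζ hζ j
      show (starRingEnd ℂ) (v j) = ζ * (((1:ℝ)):ℂ) * (starRingEnd ℂ) (A ζ j)
      rw [hlin ζ (sphere_subset_closedBall hζ), PiLp.smul_apply, smul_eq_mul]
      rw [mem_sphere_zero_iff_norm] at hζ
      have hmul : ζ * (starRingEnd ℂ) ζ = 1 := by
        rw [Complex.mul_conj]
        norm_cast
        rw [Complex.normSq_eq_norm_sq, hζ]; norm_num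
      rw [map_mul]
      push_cast
      calc (starRingEnd ℂ) (v j) = (ζ * (starRingEnd ℂ) ζ) * (starRingEnd ℂ) (v j) := by
            rw [hmul, one_mul]
        _ = ζ * 1 * ((starRingEnd ℂ) ζ * (starRingEnd ℂ) (v j)) := by ring
end

section
/- Fix n ≥ 2 and r ∈ (0,1]. Define Φ from {z ∈ ℂ^n : |z| = 1, zₙ ≠ 0} to ℂ^n × ℂ^{n-1} by Φ(z) = (r z, (conj(z₁)/conj(zₙ), …, conj(z_{n-1})/conj(zₙ))). Then for every z in the domain, letting T_z = {v ∈ ℂ^n : Re⟨z, v⟩ = 0} be the real tangent space to the unit sphere at z, and letting W be the image of T_z under the real (Fréchet) derivative of Φ at z, the real subspace W ⊆ ℂ^n × ℂ^{n-1} satisfies W ∩ (i·W) = {0}; that is, the image of the sphere under Φ is a totally real submanifold of ℂ^n × ℂ^{n-1}. -/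
open Complex Metric Set
open scoped InnerProductSpace

/-- The chart map `Φ(z) = (r z, (conj z₁ / conj zₙ, …, conj z_{n-1} / conj zₙ))`,
sending a point of the unit sphere to the lift (in an affine chart of `ℙT*ℂⁿ`) of the
stationary disc of the ball through `0` and `z`, at the parameter `r`. -/
noncomputable def PhiLift (n : ℕ) (hn : 2 ≤ n) (r : ℝ)
    (z : EuclideanSpace ℂ (Fin n)) :
    EuclideanSpace ℂ (Fin n) × EuclideanSpace ℂ (Fin (n - 1)) :=
  ((r : ℂ) • z,
    WithLp.toLp 2 (fun j : Fin (n - 1) =>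
      (starRingEnd ℂ) (z ⟨j.1, Nat.lt_of_lt_of_le j.isLt (Nat.sub_le n 1)⟩) /
        (starRingEnd ℂ) (z ⟨n - 1, Nat.sub_lt (by omega) one_pos⟩)))

theorem phiLift_exists_deriv {n : ℕ} (hn : 2 ≤ n) (r : ℝ)
    (z : EuclideanSpace ℂ (Fin n))
    (hzn : z ⟨n - 1, Nat.sub_lt (by omega) one_pos⟩ ≠ 0) :
    ∃ L : EuclideanSpace ℂ (Fin n) →L[ℝ]
        EuclideanSpace ℂ (Fin n) × EuclideanSpace ℂ (Fin (n - 1)),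
      HasFDerivAt (PhiLift n hn r) L z ∧
      ∀ v, (L v).1 = (r : ℂ) • v ∧
        ∀ j : Fin (n - 1), (L v).2 j =
          ((starRingEnd ℂ) (z ⟨n - 1, Nat.sub_lt (by omega) one_pos⟩))⁻¹ *
            (starRingEnd ℂ) (v ⟨j.1, Nat.lt_of_lt_of_le j.isLt (Nat.sub_le n 1)⟩) -
          ((starRingEnd ℂ) (z ⟨j.1, Nat.lt_of_lt_of_le j.isLt (Nat.sub_le n 1)⟩) /
            ((starRingEnd ℂ) (z ⟨n - 1, Nat.sub_lt (by omega) one_pos⟩)) ^ 2) *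
            (starRingEnd ℂ) (v ⟨n - 1, Nat.sub_lt (by omega) one_pos⟩) := by
  classical
  set N : Fin n := ⟨n - 1, Nat.sub_lt (by omega) one_pos⟩ with hN
  set conjL : ℂ →L[ℝ] ℂ := Complex.conjCLE.toContinuousLinearMap with hconjL
  have hproj : ∀ k : Fin n,
      HasFDerivAt (fun w : EuclideanSpace ℂ (Fin n) => (starRingEnd ℂ) (w k))
        (conjL.comp ((EuclideanSpace.proj k).restrictScalars ℝ)) z := fun k =>
    (conjL.comp ((EuclideanSpace.proj k).restrictScalars ℝ)).hasFDerivAt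
  have hcne : (starRingEnd ℂ) (z N) ≠ 0 := by simpa using hzn
  have hinv : HasFDerivAt (fun w : ℂ => w⁻¹)
      (((1 : ℂ →L[ℂ] ℂ).smulRight (-((starRingEnd ℂ) (z N) ^ 2)⁻¹)).restrictScalars ℝ)
      ((starRingEnd ℂ) (z N)) := (hasFDerivAt_inv hcne).restrictScalars ℝ
  have hinvz : HasFDerivAt
      (fun w : EuclideanSpace ℂ (Fin n) => ((starRingEnd ℂ) (w N))⁻¹)
      ((((1 : ℂ →L[ℂ] ℂ).smulRight (-((starRingEnd ℂ) (z N) ^ 2)⁻¹)).restrictScalars ℝ).comp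
        (conjL.comp ((EuclideanSpace.proj N).restrictScalars ℝ))) z :=
    hinv.comp z (hproj N)
  set M : (j : Fin (n - 1)) → (EuclideanSpace ℂ (Fin n) →L[ℝ] ℂ) := fun j =>
    (starRingEnd ℂ) (z ⟨j.1, Nat.lt_of_lt_of_le j.isLt (Nat.sub_le n 1)⟩) •
      ((((1 : ℂ →L[ℂ] ℂ).smulRight (-((starRingEnd ℂ) (z N) ^ 2)⁻¹)).restrictScalars ℝ).comp
        (conjL.comp ((EuclideanSpace.proj N).restrictScalars ℝ))) +
    ((starRingEnd ℂ) (z N))⁻¹ •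
      (conjL.comp ((EuclideanSpace.proj
        (⟨j.1, Nat.lt_of_lt_of_le j.isLt (Nat.sub_le n 1)⟩ : Fin n)).restrictScalars ℝ))
    with hM
  have hj : ∀ j : Fin (n - 1), HasFDerivAt
      (fun w : EuclideanSpace ℂ (Fin n) =>
        (starRingEnd ℂ) (w ⟨j.1, Nat.lt_of_lt_of_le j.isLt (Nat.sub_le n 1)⟩) /
          (starRingEnd ℂ) (w N)) (M j) z := by
    intro j
    have := (hproj ⟨j.1, Nat.lt_of_lt_of_le j.isLt (Nat.sub_le n 1)⟩).mul hinvz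
    simp only [div_eq_mul_inv]
    exact this
  have hpi : HasFDerivAt
      (fun (w : EuclideanSpace ℂ (Fin n)) (j : Fin (n - 1)) =>
        (starRingEnd ℂ) (w ⟨j.1, Nat.lt_of_lt_of_le j.isLt (Nat.sub_le n 1)⟩) /
          (starRingEnd ℂ) (w N)) (ContinuousLinearMap.pi M) z :=
    hasFDerivAt_pi.2 hj
  set e : (Fin (n - 1) → ℂ) →L[ℝ] EuclideanSpace ℂ (Fin (n - 1)) :=
    ((PiLp.continuousLinearEquiv 2 ℝ (fun _ : Fin (n - 1) => ℂ)).symm :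
      (Fin (n - 1) → ℂ) ≃L[ℝ] EuclideanSpace ℂ (Fin (n - 1))).toContinuousLinearMap with he
  have h2 := e.hasFDerivAt.comp z hpi
  have h1 : HasFDerivAt (fun w : EuclideanSpace ℂ (Fin n) => (r : ℂ) • w)
      ((r : ℂ) • ContinuousLinearMap.id ℝ (EuclideanSpace ℂ (Fin n))) z :=
    (hasFDerivAt_id z).const_smul ((r : ℂ))
  refine ⟨(((r : ℂ) • ContinuousLinearMap.id ℝ (EuclideanSpace ℂ (Fin n))).prod
      (e.comp (ContinuousLinearMap.pi M))), ?_, fun v => ⟨?_, fun j => ?_⟩⟩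
  · exact HasFDerivAt.prodMk h1 h2
  · simp
  · simp only [he, hM, hconjL, ContinuousLinearMap.prod_apply, ContinuousLinearMap.coe_comp',
      Function.comp_apply, ContinuousLinearMap.coe_coe, ContinuousLinearEquiv.coe_coe,
      PiLp.continuousLinearEquiv_symm_apply, PiLp.toLp_apply,
      ContinuousLinearMap.pi_apply, ContinuousLinearMap.add_apply,
      ContinuousLinearMap.smul_apply, ContinuousLinearMap.coe_restrictScalars',
      ContinuousLinearMap.smulRight_apply, ContinuousLinearMap.one_apply,
      Complex.conjCLE_apply,
      PiLp.proj_apply, smul_eq_mul]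
    ring
/-- **The union of the lifts of the stationary discs through the origin is totally real
away from the fiber over the origin.** For any `0 < r ≤ 1` and any point `z` of the unit
sphere with `zₙ ≠ 0`, the image under the real derivative of `Φ` at `z` of the real
tangent space `T_z = {v : Re⟪z, v⟫ = 0}` to the sphere is a real subspace `W` of
`ℂⁿ × ℂⁿ⁻¹` satisfying `W ∩ i·W = {0}`. -/
theorem lift_of_stationary_discs_totally_real
    {n : ℕ} (hn : 2 ≤ n) (r : ℝ) (hr0 : 0 < r) (hr1 : r ≤ 1)
    (z : EuclideanSpace ℂ (Fin n)) (hz : ‖z‖ = 1)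
    (hzn : z ⟨n - 1, Nat.sub_lt (by omega) one_pos⟩ ≠ 0)
    (W : Set (EuclideanSpace ℂ (Fin n) × EuclideanSpace ℂ (Fin (n - 1))))
    (hW : W = fderiv ℝ (PhiLift n hn r) z ''
      {v : EuclideanSpace ℂ (Fin n) | (⟪z, v⟫_ℂ).re = 0}) :
    W ∩ ((fun x => (Complex.I : ℂ) • x) '' W) = {0} := by
  obtain ⟨L, hL, hLapp⟩ := phiLift_exists_deriv hn r z hzn
  rw [hW, hL.fderiv]
  set N : Fin n := ⟨n - 1, Nat.sub_lt (by omega) one_pos⟩ with hN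
  have hzN : z N ≠ 0 := hzn
  have hcne : (starRingEnd ℂ) (z N) ≠ 0 := by simpa using hzN
  apply Set.eq_singleton_iff_unique_mem.mpr
  constructor
  · refine ⟨⟨0, by simp, map_zero L⟩, 0, ⟨0, by simp, map_zero L⟩, smul_zero _⟩
  · rintro w ⟨⟨v, hv, rfl⟩, y, ⟨u, hu, rfl⟩, heq⟩
    -- heq : I • L u = L v
    have h1 : Complex.I • ((L u).1) = (L v).1 := congrArg Prod.fst heq
    rw [(hLapp u).1, (hLapp v).1] at h1
    have hrne : (r : ℂ) ≠ 0 := Complex.ofReal_ne_zero.mpr hr0.ne'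
    have hvu : v = Complex.I • u := by
      apply smul_right_injective (EuclideanSpace ℂ (Fin n)) hrne
      show (r : ℂ) • v = (r : ℂ) • (Complex.I • u)
      rw [← h1, smul_comm]
    have hinner : ⟪z, u⟫_ℂ = 0 := by
      apply Complex.ext
      · simpa using hu
      · have h : (⟪z, Complex.I • u⟫_ℂ).re = 0 := by rw [← hvu]; exact hv
        rw [inner_smul_right] at h
        simp only [Set.mem_setOf_eq, Complex.mul_re, Complex.I_re, Complex.I_im,
          zero_mul, one_mul, zero_sub, neg_eq_zero] at h
        simpa using h
    have hcoord : ∀ k : Fin n, u k * z N = z k * u N := by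
      intro k
      by_cases hk : (k : ℕ) = n - 1
      · have hkN : k = N := Fin.ext hk
        rw [hkN]; ring
      · have hk' : (k : ℕ) < n - 1 := by
          have := k.isLt; omega
        -- second-coordinate equation at j = ⟨k, hk'⟩
        have h2 : Complex.I * ((L u).2 ⟨(k : ℕ), hk'⟩) = (L v).2 ⟨(k : ℕ), hk'⟩ := by
          have := congrArg (fun p : (EuclideanSpace ℂ (Fin n) × EuclideanSpace ℂ (Fin (n - 1))) =>
            p.2 ⟨(k : ℕ), hk'⟩) heq
          simpa [Prod.smul_snd, PiLp.smul_apply, smul_eq_mul] using this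
        rw [(hLapp u).2 ⟨(k : ℕ), hk'⟩, (hLapp v).2 ⟨(k : ℕ), hk'⟩, hvu] at h2
        have hkk : (⟨((⟨(k : ℕ), hk'⟩ : Fin (n - 1)) : ℕ),
            Nat.lt_of_lt_of_le (Fin.isLt _) (Nat.sub_le n 1)⟩ : Fin n) = k := Fin.ext rfl
        rw [hkk] at h2
        simp only [PiLp.smul_apply, smul_eq_mul, map_mul, Complex.conj_I] at h2
        -- h2 : I * (c⁻¹ * conj (u k) - (conj (z k) / c ^ 2) * conj (u N))
        --      = c⁻¹ * (-I * conj (u k)) - (conj (z k) / c ^ 2) * (-I * conj (u N))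
        have hA : ((starRingEnd ℂ) (z N))⁻¹ * (starRingEnd ℂ) (u k) -
            ((starRingEnd ℂ) (z k) / ((starRingEnd ℂ) (z N)) ^ 2) * (starRingEnd ℂ) (u N)
              = 0 := by
          have h3 := h2
          linear_combination (-Complex.I / 2) * h3 +
            (((starRingEnd ℂ) (z N))⁻¹ * (starRingEnd ℂ) (u k) -
              (starRingEnd ℂ) (z k) / ((starRingEnd ℂ) (z N)) ^ 2 * (starRingEnd ℂ) (u N)) *
              Complex.I_sq
        rw [sub_eq_zero] at hA
        have h4 : (starRingEnd ℂ) (u k) * (starRingEnd ℂ) (z N) =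
            (starRingEnd ℂ) (z k) * (starRingEnd ℂ) (u N) := by
          field_simp at hA
          linear_combination hA
        have h5 := congrArg (starRingEnd ℂ) h4
        simpa [map_mul, Complex.conj_conj] using h5
    have huz : u = (u N / z N) • z := by
      refine PiLp.ext fun k => ?_
      show u k = ((u N / z N) • z) k
      rw [PiLp.smul_apply, smul_eq_mul]
      field_simp
      linear_combination hcoord k
    have haz : u N / z N = 0 := by
      have h5 : ⟪z, u⟫_ℂ = (u N / z N) * ((‖z‖ : ℂ)) ^ 2 := by
        conv_lhs => rw [huz]
        rw [inner_smul_right, inner_self_eq_norm_sq_to_K]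
        rfl
      rw [hinner, hz] at h5
      simpa using h5.symm
    have hu0 : u = 0 := by
      rw [huz, haz, zero_smul]
    rw [← heq, hu0, map_zero]
    simp
end
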